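/- Let n ≥ 2, let Ω ∈ ℝⁿ be a unit vector, let η ∈ ℝ, and let G_η(u) := e^{η(u·Ω)²}/Z_η with Z_η := ∫_{S^{n−1}} e^{η(v·Ω)²} dσ(v). Write P := Id − Ω⊗Ω, u_⊥ := u − (u·Ω)Ω, and d₂₂ := ∫_{S^{n−1}} (u·Ω)²(1 − (u·Ω)²) G_η(u) dσ(u). Then for all indices i, j, k ∈ {1,…,n}: ∫_{S^{n−1}} (u·Ω) (u_⊥)_i u_j u_k G_η(u) dσ(u) = (d₂₂/(n−1)) ( P_{ij} Ω_k + P_{ik} Ω_j ). -/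

import Mathlib

open MeasureTheory Metric
open scoped RealInnerProductSpace

/-- The image of a point of the unit sphere of `ℝⁿ` under a linear isometry. -/
noncomputable def sphereMap {n : ℕ}
    (e : EuclideanSpace ℝ (Fin n) ≃ₗᵢ[ℝ] EuclideanSpace ℝ (Fin n))
    (u : sphere (0 : EuclideanSpace ℝ (Fin n)) 1) :
    sphere (0 : EuclideanSpace ℝ (Fin n)) 1 :=
  ⟨e u, by
    rw [mem_sphere_zero_iff_norm, e.norm_map]
    exact mem_sphere_zero_iff_norm.mp u.2⟩

/-- A measure on the unit sphere of `ℝⁿ` is rotation invariant if it is invariant under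
every linear isometry of `ℝⁿ`. -/
def RotationInvariant {n : ℕ} (σ : Measure (sphere (0 : EuclideanSpace ℝ (Fin n)) 1)) :
    Prop :=
  ∀ e : EuclideanSpace ℝ (Fin n) ≃ₗᵢ[ℝ] EuclideanSpace ℝ (Fin n),
    σ.map (sphereMap e) = σ

/-- The Gibbs density `G_η(u) = e^{η(u·Ω)²}/Z_η` on the unit sphere, with
`Z_η = ∫ e^{η(v·Ω)²} dσ(v)`. -/
noncomputable def gibbs {n : ℕ} (σ : Measure (sphere (0 : EuclideanSpace ℝ (Fin n)) 1))
    (η : ℝ) (Ω : EuclideanSpace ℝ (Fin n))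
    (u : sphere (0 : EuclideanSpace ℝ (Fin n)) 1) : ℝ :=
  Real.exp (η * ⟪(u : EuclideanSpace ℝ (Fin n)), Ω⟫ ^ 2) /
    ∫ v : sphere (0 : EuclideanSpace ℝ (Fin n)) 1,
      Real.exp (η * ⟪(v : EuclideanSpace ℝ (Fin n)), Ω⟫ ^ 2) ∂σ

/-- The `(i,j)` entry of the orthogonal projection matrix `P = Id − Ω⊗Ω` onto `Ω⊥`. -/
noncomputable def projEntry {n : ℕ} (Ω : EuclideanSpace ℝ (Fin n)) (i j : Fin n) : ℝ :=
  (if i = j then (1 : ℝ) else 0) - Ω i * Ω j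

namespace GibbsH2r
variable {n : ℕ}
local notation "E" => EuclideanSpace ℝ (Fin n)
local notation "S" => sphere (0 : EuclideanSpace ℝ (Fin n)) 1

lemma cont_t (Ω : EuclideanSpace ℝ (Fin n)) : Continuous fun u : S => ⟪(u : E), Ω⟫ :=
  Continuous.inner continuous_subtype_val continuous_const

lemma cont_gibbs (σ : Measure S) (η : ℝ) (Ω : EuclideanSpace ℝ (Fin n)) :
    Continuous (gibbs σ η Ω) := by
  unfold gibbs
  exact (Real.continuous_exp.comp (continuous_const.mul ((cont_t Ω).pow 2))).div_const _

lemma cont_innerw (Ω x : EuclideanSpace ℝ (Fin n)) :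
    Continuous fun u : S => ⟪(u : E) - ⟪(u : E), Ω⟫ • Ω, x⟫ :=
  Continuous.inner (continuous_subtype_val.sub ((cont_t Ω).smul continuous_const))
    continuous_const

lemma integ (σ : Measure S) (hprob : IsProbabilityMeasure σ) {f : S → ℝ}
    (hf : Continuous f) : Integrable f σ :=
  hf.integrable_of_hasCompactSupport (HasCompactSupport.of_compactSpace f)

lemma cont_sphereMap (e : EuclideanSpace ℝ (Fin n) ≃ₗᵢ[ℝ] EuclideanSpace ℝ (Fin n)) :
    Continuous (sphereMap e) :=
  Continuous.subtype_mk (e.continuous.comp continuous_subtype_val) _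

lemma integral_comp (σ : Measure S) (hinv : RotationInvariant σ)
    (e : EuclideanSpace ℝ (Fin n) ≃ₗᵢ[ℝ] EuclideanSpace ℝ (Fin n))
    {f : S → ℝ} (hf : Continuous f) :
    ∫ u, f (sphereMap e u) ∂σ = ∫ u, f u ∂σ := by
  conv_rhs => rw [← hinv e]
  rw [integral_map (cont_sphereMap e).aemeasurable hf.aestronglyMeasurable]

/-- `Mfun x y u = t² ⟪w,x⟫ ⟪w,y⟫ G(u)`. -/
noncomputable def Mfun (σ : Measure S) (η : ℝ) (Ω x y : EuclideanSpace ℝ (Fin n))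
    (u : S) : ℝ :=
  ⟪(u : E), Ω⟫ ^ 2 * ⟪(u : E) - ⟪(u : E), Ω⟫ • Ω, x⟫ *
    ⟪(u : E) - ⟪(u : E), Ω⟫ • Ω, y⟫ * gibbs σ η Ω u

lemma cont_Mfun (σ : Measure S) (η : ℝ) (Ω x y : EuclideanSpace ℝ (Fin n)) :
    Continuous (Mfun σ η Ω x y) := by
  unfold Mfun
  exact ((((cont_t Ω).pow 2).mul (cont_innerw Ω x)).mul (cont_innerw Ω y)).mul
    (cont_gibbs σ η Ω)

noncomputable def M (σ : Measure S) (η : ℝ) (Ω x y : EuclideanSpace ℝ (Fin n)) : ℝ :=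
  ∫ u, Mfun σ η Ω x y u ∂σ

lemma gibbs_comp (σ : Measure S) (η : ℝ) (Ω : EuclideanSpace ℝ (Fin n))
    (e : EuclideanSpace ℝ (Fin n) ≃ₗᵢ[ℝ] EuclideanSpace ℝ (Fin n)) (heΩ : e Ω = Ω)
    (u : S) : gibbs σ η Ω (sphereMap e u) = gibbs σ η Ω u := by
  have htu : ⟪e (u : E), Ω⟫ = ⟪(u : E), Ω⟫ := by
    conv_lhs => rw [← heΩ]
    exact e.inner_map_map _ _
  unfold gibbs
  simp only [sphereMap]
  rw [htu]

lemma M_inv (σ : Measure S) (hprob : IsProbabilityMeasure σ) (hinv : RotationInvariant σ)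
    (η : ℝ) (Ω : EuclideanSpace ℝ (Fin n))
    (e : EuclideanSpace ℝ (Fin n) ≃ₗᵢ[ℝ] EuclideanSpace ℝ (Fin n)) (heΩ : e Ω = Ω)
    (x y : EuclideanSpace ℝ (Fin n)) :
    M σ η Ω (e.symm x) (e.symm y) = M σ η Ω x y := by
  have hsub : ∀ v z : EuclideanSpace ℝ (Fin n), ⟪e v, z⟫ = ⟪v, e.symm z⟫ := by
    intro v z
    nth_rewrite 1 [← e.apply_symm_apply z]
    exact e.inner_map_map _ _
  have h1 : ∀ u : S, Mfun σ η Ω (e.symm x) (e.symm y) u = Mfun σ η Ω x y (sphereMap e u) := by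
    intro u
    have htu : ⟪e (u : E), Ω⟫ = ⟪(u : E), Ω⟫ := by
      conv_lhs => rw [← heΩ]
      exact e.inner_map_map _ _
    have hw : e ((u : E) - ⟪(u : E), Ω⟫ • Ω) = e (u : E) - ⟪(u : E), Ω⟫ • Ω := by
      rw [map_sub, LinearIsometryEquiv.map_smul, heΩ]
    unfold Mfun
    rw [gibbs_comp σ η Ω e heΩ u]
    simp only [sphereMap]
    rw [htu, ← hw, hsub, hsub]
  calc M σ η Ω (e.symm x) (e.symm y)
      = ∫ u, Mfun σ η Ω x y (sphereMap e u) ∂σ := integral_congr_ae (.of_forall h1)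
    _ = M σ η Ω x y := integral_comp σ hinv e (cont_Mfun σ η Ω x y)


-- reflection swapping two unit vectors, fixing a vector orthogonal to both
lemma refl_lemma (Ω x x' : EuclideanSpace ℝ (Fin n)) (hx : ⟪x, Ω⟫ = 0) (hx' : ⟪x', Ω⟫ = 0)
    (hnx : ‖x‖ = 1) (hnx' : ‖x'‖ = 1) :
    ∃ e : EuclideanSpace ℝ (Fin n) ≃ₗᵢ[ℝ] EuclideanSpace ℝ (Fin n),
      e Ω = Ω ∧ e x = x' := by
  set K : Submodule ℝ (EuclideanSpace ℝ (Fin n)) := ℝ ∙ (x - x') with hK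
  refine ⟨Submodule.reflection Kᗮ, ?_, ?_⟩
  · apply Submodule.reflection_mem_subspace_eq_self
    rw [hK, Submodule.mem_orthogonal_singleton_iff_inner_right]
    rw [inner_sub_left, hx, hx']
    ring
  · have hm : ((2:ℝ)⁻¹) • (x + x') ∈ Kᗮ := by
      rw [hK, Submodule.mem_orthogonal_singleton_iff_inner_right]
      rw [real_inner_smul_right, inner_add_right, inner_sub_left, inner_sub_left,
        real_inner_comm x' x]
      have h1 : ⟪x, x⟫ = 1 := by
        rw [real_inner_self_eq_norm_mul_norm, hnx]; ring
      have h2 : ⟪x', x'⟫ = 1 := by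
        rw [real_inner_self_eq_norm_mul_norm, hnx']; ring
      rw [h1, h2]; ring
    have hh : ((2:ℝ)⁻¹) • (x - x') ∈ Kᗮᗮ :=
      K.le_orthogonal_orthogonal (Submodule.smul_mem _ _ (Submodule.mem_span_singleton_self _))
    have hxd : x = ((2:ℝ)⁻¹) • (x + x') + ((2:ℝ)⁻¹) • (x - x') := by module
    calc Submodule.reflection Kᗮ x
        = Submodule.reflection Kᗮ (((2:ℝ)⁻¹) • (x + x')) + Submodule.reflection Kᗮ (((2:ℝ)⁻¹) • (x - x')) := by
          rw [← map_add]
          exact congrArg _ hxd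
      _ = ((2:ℝ)⁻¹) • (x + x') + -(((2:ℝ)⁻¹) • (x - x')) := by
          rw [Submodule.reflection_mem_subspace_eq_self hm,
            Submodule.reflection_mem_subspace_orthogonalComplement_eq_neg hh]
      _ = x' := by module


section
variable (σ : Measure (sphere (0 : EuclideanSpace ℝ (Fin n)) 1)) (η : ℝ)
end

lemma M_smul_left (σ : Measure S) (η : ℝ) (Ω x y : EuclideanSpace ℝ (Fin n)) (c : ℝ) :
    M σ η Ω (c • x) y = c * M σ η Ω x y := by
  unfold M
  rw [← integral_const_mul]
  refine integral_congr_ae (.of_forall fun u => ?_)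
  unfold Mfun
  rw [real_inner_smul_right]
  ring

lemma M_comm (σ : Measure S) (η : ℝ) (Ω x y : EuclideanSpace ℝ (Fin n)) :
    M σ η Ω x y = M σ η Ω y x := by
  unfold M
  refine integral_congr_ae (.of_forall fun u => ?_)
  unfold Mfun
  ring

lemma M_add_left (σ : Measure S) (hprob : IsProbabilityMeasure σ)
    (η : ℝ) (Ω x x' y : EuclideanSpace ℝ (Fin n)) :
    M σ η Ω (x + x') y = M σ η Ω x y + M σ η Ω x' y := by
  unfold M
  rw [← integral_add (integ σ hprob (cont_Mfun σ η Ω x y))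
    (integ σ hprob (cont_Mfun σ η Ω x' y))]
  refine integral_congr_ae (.of_forall fun u => ?_)
  unfold Mfun
  rw [inner_add_right]
  ring

lemma M_invariant_self (σ : Measure S) (hprob : IsProbabilityMeasure σ)
    (hinv : RotationInvariant σ) (η : ℝ) (Ω : EuclideanSpace ℝ (Fin n))
    (x x' : EuclideanSpace ℝ (Fin n)) (hx : ⟪x, Ω⟫ = 0) (hx' : ⟪x', Ω⟫ = 0)
    (hnx : ‖x‖ = 1) (hnx' : ‖x'‖ = 1) :
    M σ η Ω x x = M σ η Ω x' x' := by
  obtain ⟨e, heΩ, hex⟩ := refl_lemma Ω x x' hx hx' hnx hnx'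
  have h1 : e.symm x' = x := by rw [← hex, e.symm_apply_apply]
  calc M σ η Ω x x = M σ η Ω (e.symm x') (e.symm x') := by rw [h1]
    _ = M σ η Ω x' x' := M_inv σ hprob hinv η Ω e heΩ x' x'

lemma M_smul_right (σ : Measure S) (η : ℝ) (Ω x y : EuclideanSpace ℝ (Fin n)) (c : ℝ) :
    M σ η Ω x (c • y) = c * M σ η Ω x y := by
  rw [M_comm, M_smul_left, M_comm]

lemma M_add_right (σ : Measure S) (hprob : IsProbabilityMeasure σ)
    (η : ℝ) (Ω x y y' : EuclideanSpace ℝ (Fin n)) :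
    M σ η Ω x (y + y') = M σ η Ω x y + M σ η Ω x y' := by
  rw [M_comm, M_add_left σ hprob, M_comm, M_comm σ η Ω y' x]

lemma M_self (σ : Measure S) (hprob : IsProbabilityMeasure σ)
    (hinv : RotationInvariant σ) (η : ℝ) (Ω x₀ : EuclideanSpace ℝ (Fin n))
    (hx₀ : ⟪x₀, Ω⟫ = 0) (hnx₀ : ‖x₀‖ = 1)
    (z : EuclideanSpace ℝ (Fin n)) (hz : ⟪z, Ω⟫ = 0) :
    M σ η Ω z z = ⟪z, z⟫ * M σ η Ω x₀ x₀ := by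
  by_cases h0 : z = 0
  · subst h0
    rw [show (0 : EuclideanSpace ℝ (Fin n)) = (0:ℝ) • (0 : EuclideanSpace ℝ (Fin n)) by
      rw [zero_smul]]
    rw [M_smul_left, inner_smul_left]
    simp
  · set zh : EuclideanSpace ℝ (Fin n) := ‖z‖⁻¹ • z with hzh
    have hzz : z = ‖z‖ • zh := by
      rw [hzh, smul_smul, mul_inv_cancel₀ (norm_ne_zero_iff.mpr h0), one_smul]
    have hperp : ⟪zh, Ω⟫ = 0 := by rw [hzh, real_inner_smul_left, hz, mul_zero]
    have hunit : ‖zh‖ = 1 := norm_smul_inv_norm h0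
    calc M σ η Ω z z = M σ η Ω (‖z‖ • zh) (‖z‖ • zh) := by rw [← hzz]
      _ = ‖z‖ * (‖z‖ * M σ η Ω zh zh) := by rw [M_smul_left, M_smul_right]
      _ = (‖z‖ * ‖z‖) * M σ η Ω x₀ x₀ := by
          rw [M_invariant_self σ hprob hinv η Ω zh x₀ hperp hx₀ hunit hnx₀]; ring
      _ = ⟪z, z⟫ * M σ η Ω x₀ x₀ := by rw [real_inner_self_eq_norm_mul_norm]

lemma M_perp_eq (σ : Measure S) (hprob : IsProbabilityMeasure σ)
    (hinv : RotationInvariant σ) (η : ℝ) (Ω x₀ : EuclideanSpace ℝ (Fin n))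
    (hx₀ : ⟪x₀, Ω⟫ = 0) (hnx₀ : ‖x₀‖ = 1)
    (x y : EuclideanSpace ℝ (Fin n)) (hx : ⟪x, Ω⟫ = 0) (hy : ⟪y, Ω⟫ = 0) :
    M σ η Ω x y = ⟪x, y⟫ * M σ η Ω x₀ x₀ := by
  have hxy : ⟪x + y, Ω⟫ = 0 := by rw [inner_add_left, hx, hy, add_zero]
  have h1 := M_self σ hprob hinv η Ω x₀ hx₀ hnx₀ (x + y) hxy
  have h2 := M_self σ hprob hinv η Ω x₀ hx₀ hnx₀ x hx
  have h3 := M_self σ hprob hinv η Ω x₀ hx₀ hnx₀ y hy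
  rw [M_add_left σ hprob, M_add_right σ hprob, M_add_right σ hprob,
    M_comm σ η Ω y x, real_inner_add_add_self] at h1
  linarith

lemma inner_w_Ω (Ω : EuclideanSpace ℝ (Fin n)) (hΩ : ‖Ω‖ = 1) (u : S) :
    ⟪(u : E) - ⟪(u : E), Ω⟫ • Ω, Ω⟫ = 0 := by
  rw [inner_sub_left, real_inner_smul_left, real_inner_self_eq_norm_mul_norm, hΩ]
  ring

lemma M_proj (σ : Measure S) (η : ℝ) (Ω : EuclideanSpace ℝ (Fin n)) (hΩ : ‖Ω‖ = 1)
    (x y : EuclideanSpace ℝ (Fin n)) :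
    M σ η Ω x y = M σ η Ω (x - ⟪x, Ω⟫ • Ω) (y - ⟪y, Ω⟫ • Ω) := by
  unfold M
  refine integral_congr_ae (.of_forall fun u => ?_)
  unfold Mfun
  rw [inner_sub_right, inner_sub_right, real_inner_smul_right, real_inner_smul_right,
    inner_w_Ω Ω hΩ u]
  ring

lemma proj_perp (Ω : EuclideanSpace ℝ (Fin n)) (hΩ : ‖Ω‖ = 1)
    (x : EuclideanSpace ℝ (Fin n)) : ⟪x - ⟪x, Ω⟫ • Ω, Ω⟫ = 0 := by
  rw [inner_sub_left, real_inner_smul_left, real_inner_self_eq_norm_mul_norm, hΩ]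
  ring

lemma M_formula (σ : Measure S) (hprob : IsProbabilityMeasure σ)
    (hinv : RotationInvariant σ) (η : ℝ) (Ω x₀ : EuclideanSpace ℝ (Fin n))
    (hΩ : ‖Ω‖ = 1) (hx₀ : ⟪x₀, Ω⟫ = 0) (hnx₀ : ‖x₀‖ = 1)
    (x y : EuclideanSpace ℝ (Fin n)) :
    M σ η Ω x y = ⟪x - ⟪x, Ω⟫ • Ω, y - ⟪y, Ω⟫ • Ω⟫ * M σ η Ω x₀ x₀ := by
  rw [M_proj σ η Ω hΩ x y]
  exact M_perp_eq σ hprob hinv η Ω x₀ hx₀ hnx₀ _ _ (proj_perp Ω hΩ x) (proj_perp Ω hΩ y)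

lemma exists_unit_perp (hn : 2 ≤ n) (Ω : EuclideanSpace ℝ (Fin n)) (hΩ : ‖Ω‖ = 1) :
    ∃ x : EuclideanSpace ℝ (Fin n), ⟪x, Ω⟫ = 0 ∧ ‖x‖ = 1 := by
  have hΩΩ : ⟪Ω, Ω⟫ = 1 := by rw [real_inner_self_eq_norm_mul_norm, hΩ]; ring
  set v : Fin n → EuclideanSpace ℝ (Fin n) :=
    fun i => EuclideanSpace.single i 1 - Ω i • Ω with hv
  have hvperp : ∀ i, ⟪v i, Ω⟫ = 0 := by
    intro i
    rw [hv]
    rw [inner_sub_left, real_inner_smul_left, hΩΩ, EuclideanSpace.inner_single_left]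
    simp
  have hvnorm : ∀ i, ⟪v i, v i⟫ = 1 - Ω i ^ 2 := by
    intro i
    rw [hv]
    simp only [inner_sub_left, inner_sub_right, real_inner_smul_left, real_inner_smul_right,
      hΩΩ, EuclideanSpace.inner_single_left, EuclideanSpace.inner_single_right,
      EuclideanSpace.single_apply]
    simp [real_inner_comm]
    ring
  have hsum : ∑ i, ⟪v i, v i⟫ = (n : ℝ) - 1 := by
    have hΩsum : ∑ i, Ω i * Ω i = 1 := by
      rw [← hΩΩ]
      rfl
    simp only [hvnorm]
    rw [Finset.sum_sub_distrib]
    simp only [pow_two]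
    rw [hΩsum, Finset.sum_const, Finset.card_univ, Fintype.card_fin]
    simp
  have hex : ∃ i, v i ≠ 0 := by
    by_contra hcon
    push_neg at hcon
    have : ∑ i, ⟪v i, v i⟫ = 0 := by
      simp [hcon]
    rw [hsum] at this
    have : (n : ℝ) ≥ 2 := by exact_mod_cast hn
    linarith
  obtain ⟨i, hi⟩ := hex
  refine ⟨‖v i‖⁻¹ • v i, ?_, norm_smul_inv_norm hi⟩
  rw [real_inner_smul_left, hvperp, mul_zero]

lemma inner_single_real (x : EuclideanSpace ℝ (Fin n)) (i : Fin n) :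
    ⟪x, EuclideanSpace.single i (1:ℝ)⟫ = x i := by
  rw [EuclideanSpace.inner_single_right]
  simp

lemma inner_single_real' (x : EuclideanSpace ℝ (Fin n)) (i : Fin n) :
    ⟪EuclideanSpace.single i (1:ℝ), x⟫ = x i := by
  rw [EuclideanSpace.inner_single_left]
  simp

lemma inner_proj_single (Ω : EuclideanSpace ℝ (Fin n)) (hΩ : ‖Ω‖ = 1) (i j : Fin n) :
    ⟪EuclideanSpace.single i (1:ℝ) - ⟪EuclideanSpace.single i (1:ℝ), Ω⟫ • Ω,
      EuclideanSpace.single j (1:ℝ) - ⟪EuclideanSpace.single j (1:ℝ), Ω⟫ • Ω⟫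
      = (if i = j then (1:ℝ) else 0) - Ω i * Ω j := by
  have hΩΩ : ⟪Ω, Ω⟫ = 1 := by rw [real_inner_self_eq_norm_mul_norm, hΩ]; ring
  have h1 : ∀ k : Fin n, ⟪EuclideanSpace.single k (1:ℝ), Ω⟫ = Ω k :=
    fun k => inner_single_real' Ω k
  have h2 : ⟪EuclideanSpace.single i (1:ℝ), EuclideanSpace.single j (1:ℝ)⟫
      = (if i = j then (1:ℝ) else 0) := by
    rw [inner_single_real']
    rw [EuclideanSpace.single_apply]
  simp only [inner_sub_left, inner_sub_right, real_inner_smul_left, real_inner_smul_right,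
    hΩΩ, h1, h2, inner_single_real, inner_single_real']
  ring

lemma inner_w_self (Ω : EuclideanSpace ℝ (Fin n)) (hΩ : ‖Ω‖ = 1) (u : S) :
    ⟪(u : E) - ⟪(u : E), Ω⟫ • Ω, (u : E) - ⟪(u : E), Ω⟫ • Ω⟫
      = 1 - ⟪(u : E), Ω⟫ ^ 2 := by
  have hΩΩ : ⟪Ω, Ω⟫ = 1 := by rw [real_inner_self_eq_norm_mul_norm, hΩ]; ring
  have huu : ⟪(u : E), (u : E)⟫ = 1 := by
    rw [real_inner_self_eq_norm_mul_norm, mem_sphere_zero_iff_norm.mp u.2]; ring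
  rw [inner_sub_left, inner_sub_right, inner_sub_right, real_inner_smul_right,
    real_inner_smul_right, real_inner_smul_left, real_inner_smul_left, hΩΩ, huu,
    real_inner_comm Ω (u : E)]
  ring

lemma M_trace (σ : Measure S) (hprob : IsProbabilityMeasure σ)
    (hinv : RotationInvariant σ) (η : ℝ) (Ω x₀ : EuclideanSpace ℝ (Fin n))
    (hΩ : ‖Ω‖ = 1) (hx₀ : ⟪x₀, Ω⟫ = 0) (hnx₀ : ‖x₀‖ = 1) :
    (∫ u : S, ⟪(u : E), Ω⟫ ^ 2 * (1 - ⟪(u : E), Ω⟫ ^ 2) * gibbs σ η Ω u ∂σ)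
      = ((n : ℝ) - 1) * M σ η Ω x₀ x₀ := by
  have hstep1 : (∫ u : S, ⟪(u : E), Ω⟫ ^ 2 * (1 - ⟪(u : E), Ω⟫ ^ 2) * gibbs σ η Ω u ∂σ)
      = ∑ i : Fin n, M σ η Ω (EuclideanSpace.single i 1) (EuclideanSpace.single i 1) := by
    unfold M
    rw [← integral_finset_sum _
      (fun i _ => integ σ hprob (cont_Mfun σ η Ω _ _))]
    refine integral_congr_ae (.of_forall fun u => ?_)
    have hpt : ∀ i : Fin n, Mfun σ η Ω (EuclideanSpace.single i 1)
        (EuclideanSpace.single i 1) u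
        = ⟪(u : E), Ω⟫ ^ 2 * (((u : E) - ⟪(u : E), Ω⟫ • Ω) i
            * ((u : E) - ⟪(u : E), Ω⟫ • Ω) i) * gibbs σ η Ω u := by
      intro i
      unfold Mfun
      rw [inner_single_real]
      ring
    simp only [hpt]
    rw [← Finset.sum_mul, ← Finset.mul_sum]
    have hsum : ∑ i : Fin n, (((u : E) - ⟪(u : E), Ω⟫ • Ω) i
        * ((u : E) - ⟪(u : E), Ω⟫ • Ω) i)
        = ⟪(u : E) - ⟪(u : E), Ω⟫ • Ω, (u : E) - ⟪(u : E), Ω⟫ • Ω⟫ := rfl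
    rw [hsum, inner_w_self Ω hΩ u]
  rw [hstep1]
  have hdiag : ∀ i : Fin n, M σ η Ω (EuclideanSpace.single i 1) (EuclideanSpace.single i 1)
      = (1 - Ω i * Ω i) * M σ η Ω x₀ x₀ := by
    intro i
    rw [M_formula σ hprob hinv η Ω x₀ hΩ hx₀ hnx₀, inner_proj_single Ω hΩ i i]
    simp
  simp only [hdiag]
  rw [← Finset.sum_mul]
  congr 1
  have hΩΩ : ⟪Ω, Ω⟫ = 1 := by rw [real_inner_self_eq_norm_mul_norm, hΩ]; ring
  have hΩsum : ∑ i, Ω i * Ω i = 1 := by rw [← hΩΩ]; rfl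
  rw [Finset.sum_sub_distrib, hΩsum, Finset.sum_const, Finset.card_univ, Fintype.card_fin]
  simp

noncomputable def Tfun (σ : Measure S) (η : ℝ) (Ω x y z : EuclideanSpace ℝ (Fin n))
    (u : S) : ℝ :=
  ⟪(u : E), Ω⟫ * ⟪(u : E) - ⟪(u : E), Ω⟫ • Ω, x⟫ * ⟪(u : E), y⟫ * ⟪(u : E), z⟫ *
    gibbs σ η Ω u

lemma cont_Tfun (σ : Measure S) (η : ℝ) (Ω x y z : EuclideanSpace ℝ (Fin n)) :
    Continuous (Tfun σ η Ω x y z) := by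
  unfold Tfun
  exact (((((cont_t Ω)).mul (cont_innerw Ω x)).mul (cont_t y)).mul (cont_t z)).mul
    (cont_gibbs σ η Ω)

lemma reflΩ_exists (Ω : EuclideanSpace ℝ (Fin n)) (hΩ : ‖Ω‖ = 1) :
    ∃ e : EuclideanSpace ℝ (Fin n) ≃ₗᵢ[ℝ] EuclideanSpace ℝ (Fin n),
      e Ω = Ω ∧ ∀ v : EuclideanSpace ℝ (Fin n), e v = (2 * ⟪Ω, v⟫) • Ω - v := by
  refine ⟨Submodule.reflection (ℝ ∙ Ω), Submodule.reflection_mem_subspace_eq_self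
    (Submodule.mem_span_singleton_self Ω), fun v => ?_⟩
  rw [Submodule.reflection_apply, Submodule.starProjection_singleton ℝ v, hΩ]
  norm_num
  module

lemma T_eq (σ : Measure S) (hprob : IsProbabilityMeasure σ)
    (hinv : RotationInvariant σ) (η : ℝ) (Ω : EuclideanSpace ℝ (Fin n)) (hΩ : ‖Ω‖ = 1)
    (x y z : EuclideanSpace ℝ (Fin n)) :
    ∫ u, Tfun σ η Ω x y z u ∂σ
      = ⟪Ω, y⟫ * M σ η Ω x z + ⟪Ω, z⟫ * M σ η Ω x y := by
  obtain ⟨e, heΩ, he⟩ := reflΩ_exists Ω hΩ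
  have hpt : ∀ u : S, Tfun σ η Ω x y z u + Tfun σ η Ω x y z (sphereMap e u)
      = 2 * (⟪Ω, y⟫ * Mfun σ η Ω x z u + ⟪Ω, z⟫ * Mfun σ η Ω x y u) := by
    intro u
    have htu : ⟪e (u : E), Ω⟫ = ⟪(u : E), Ω⟫ := by
      have h := e.inner_map_map (u : E) Ω
      rw [heΩ] at h
      exact h
    unfold Tfun Mfun
    rw [gibbs_comp σ η Ω e heΩ u]
    simp only [sphereMap]
    rw [htu, he (u : E), real_inner_comm Ω (u : E)]
    simp only [inner_sub_left, real_inner_smul_left]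
    ring
  have hi1 : Integrable (Tfun σ η Ω x y z) σ := integ σ hprob (cont_Tfun σ η Ω x y z)
  have hi2 : Integrable (fun u => Tfun σ η Ω x y z (sphereMap e u)) σ :=
    integ σ hprob ((cont_Tfun σ η Ω x y z).comp (cont_sphereMap e))
  have h1 : ∫ u, Tfun σ η Ω x y z (sphereMap e u) ∂σ = ∫ u, Tfun σ η Ω x y z u ∂σ :=
    integral_comp σ hinv e (cont_Tfun σ η Ω x y z)
  have h2 : ∫ u, (Tfun σ η Ω x y z u + Tfun σ η Ω x y z (sphereMap e u)) ∂σ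
      = (∫ u, Tfun σ η Ω x y z u ∂σ) + ∫ u, Tfun σ η Ω x y z (sphereMap e u) ∂σ :=
    integral_add hi1 hi2
  have h3 : ∫ u, (Tfun σ η Ω x y z u + Tfun σ η Ω x y z (sphereMap e u)) ∂σ
      = 2 * (⟪Ω, y⟫ * M σ η Ω x z + ⟪Ω, z⟫ * M σ η Ω x y) := by
    rw [integral_congr_ae (.of_forall hpt)]
    rw [integral_const_mul]
    congr 1
    unfold M
    rw [integral_add ((integ σ hprob (cont_Mfun σ η Ω x z)).const_mul _)
      ((integ σ hprob (cont_Mfun σ η Ω x y)).const_mul _), integral_const_mul,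
      integral_const_mul]
  rw [h1] at h2
  rw [h2] at h3
  linarith

end GibbsH2r

/-- The 3-tensor `H₂^r = ∫ (u·Ω) P_{Ω⊥}u ⊗ u ⊗ u G_η dσ` equals
`(d₂₂/(n−1)) (P_{ij}Ω_k + P_{ik}Ω_j)`, with
`d₂₂ = ∫ (u·Ω)²(1−(u·Ω)²) G_η dσ`. -/
theorem gibbs_H2r_tensor (n : ℕ) (hn : 2 ≤ n)
    (σ : Measure (sphere (0 : EuclideanSpace ℝ (Fin n)) 1))
    (hprob : IsProbabilityMeasure σ) (hinv : RotationInvariant σ)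
    (Ω : EuclideanSpace ℝ (Fin n)) (hΩ : ‖Ω‖ = 1) (η : ℝ) :
    ∀ i j k : Fin n,
      (∫ u : sphere (0 : EuclideanSpace ℝ (Fin n)) 1,
          ⟪(u : EuclideanSpace ℝ (Fin n)), Ω⟫ *
            ((u : EuclideanSpace ℝ (Fin n)) i
              - ⟪(u : EuclideanSpace ℝ (Fin n)), Ω⟫ * Ω i) *
            (u : EuclideanSpace ℝ (Fin n)) j * (u : EuclideanSpace ℝ (Fin n)) k *
            gibbs σ η Ω u ∂σ)
        = ((∫ u : sphere (0 : EuclideanSpace ℝ (Fin n)) 1,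
              ⟪(u : EuclideanSpace ℝ (Fin n)), Ω⟫ ^ 2 *
                (1 - ⟪(u : EuclideanSpace ℝ (Fin n)), Ω⟫ ^ 2) * gibbs σ η Ω u ∂σ) /
            ((n : ℝ) - 1)) *
          (projEntry Ω i j * Ω k + projEntry Ω i k * Ω j) := by
  intro i j k
  have hn1 : ((n : ℝ) - 1) ≠ 0 := by
    have h2 : (2 : ℝ) ≤ (n : ℝ) := by exact_mod_cast hn
    have : (0 : ℝ) < (n : ℝ) - 1 := by linarith
    exact ne_of_gt this
  obtain ⟨x₀, hx₀, hnx₀⟩ := GibbsH2r.exists_unit_perp hn Ω hΩ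
  have htrace := GibbsH2r.M_trace σ hprob hinv η Ω x₀ hΩ hx₀ hnx₀
  have hLHS : (∫ u : sphere (0 : EuclideanSpace ℝ (Fin n)) 1,
          ⟪(u : EuclideanSpace ℝ (Fin n)), Ω⟫ *
            ((u : EuclideanSpace ℝ (Fin n)) i
              - ⟪(u : EuclideanSpace ℝ (Fin n)), Ω⟫ * Ω i) *
            (u : EuclideanSpace ℝ (Fin n)) j * (u : EuclideanSpace ℝ (Fin n)) k *
            gibbs σ η Ω u ∂σ)
      = ∫ u, GibbsH2r.Tfun σ η Ω (EuclideanSpace.single i 1) (EuclideanSpace.single j 1)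
          (EuclideanSpace.single k 1) u ∂σ := by
    refine (integral_congr_ae (.of_forall fun u => ?_)).symm
    unfold GibbsH2r.Tfun
    simp only [inner_sub_left, real_inner_smul_left, GibbsH2r.inner_single_real]
  rw [hLHS, GibbsH2r.T_eq σ hprob hinv η Ω hΩ _ _ _]
  have hM : ∀ p q : Fin n, GibbsH2r.M σ η Ω (EuclideanSpace.single p 1)
      (EuclideanSpace.single q 1) = projEntry Ω p q * GibbsH2r.M σ η Ω x₀ x₀ := by
    intro p q
    rw [GibbsH2r.M_formula σ hprob hinv η Ω x₀ hΩ hx₀ hnx₀ _ _,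
      GibbsH2r.inner_proj_single Ω hΩ p q]
    rfl
  rw [hM, hM, GibbsH2r.inner_single_real Ω j, GibbsH2r.inner_single_real Ω k, htrace]
  have hcancel : ((n : ℝ) - 1) * GibbsH2r.M σ η Ω x₀ x₀ / ((n : ℝ) - 1)
      = GibbsH2r.M σ η Ω x₀ x₀ := by
    field_simp
  rw [hcancel]
  ring
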